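/- Let S be a commutative ring, B = S[X], and Δ^α the Hasse–Schmidt derivatives on B. Let 𝓕 = {g_{n_i} W^{n_i} : 1 ≤ i ≤ m, n_i > 0} be a finite subset of B[W] closed under the two operations: (a) if g W^n ∈ 𝓕 and 0 < n' ≤ n then g W^{n'} ∈ 𝓕; (b) if g W^n ∈ 𝓕 and 0 ≤ α < n then Δ^α(g) W^{n−α} ∈ 𝓕. Then the B-subalgebra of B[W] generated by 𝓕, written ⊕ I_k W^k, satisfies: (i) I_k ⊇ I_{k+1} for all k, and (ii) Δ^α(I_n) ⊆ I_{n−α} for all 0 ≤ α ≤ n. -/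

import Mathlib

open Polynomial

section Aux

variable {S : Type*} [CommRing S] (F : Finset ((Polynomial S) × ℕ))

/-- Products of generators of total weight `n`. -/
def GenSet (n : ℕ) : Set (Polynomial S) :=
  {b | ∃ l : Multiset ((Polynomial S) × ℕ), (∀ p ∈ l, p ∈ F) ∧
    (l.map Prod.snd).sum = n ∧ (l.map Prod.fst).prod = b}

/-- The `n`-th piece of the filtration. -/
noncomputable def Jmod (n : ℕ) : Submodule (Polynomial S) (Polynomial S) :=
  Submodule.span (Polynomial S) (GenSet F n)

lemma one_mem_GenSet : (1 : Polynomial S) ∈ GenSet F 0 :=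
  ⟨0, by simp, by simp, by simp⟩

lemma mem_J_zero (c : Polynomial S) : c ∈ Jmod F 0 := by
  have := Submodule.smul_mem (Jmod F 0) c
    (Submodule.subset_span (one_mem_GenSet F))
  simpa using this

lemma singleton_mem_GenSet {p : (Polynomial S) × ℕ} (hp : p ∈ F) :
    p.1 ∈ GenSet F p.2 :=
  ⟨{p}, by simpa using hp, by simp, by simp⟩

lemma gen_mul_J {x y : Polynomial S} {a b : ℕ} (hx : x ∈ GenSet F a)
    (hy : y ∈ Jmod F b) : x * y ∈ Jmod F (a + b) := by
  induction hy using Submodule.span_induction with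
  | mem z hz =>
      obtain ⟨l₁, h₁, hs₁, hp₁⟩ := hx
      obtain ⟨l₂, h₂, hs₂, hp₂⟩ := hz
      refine Submodule.subset_span ⟨l₁ + l₂, ?_, ?_, ?_⟩
      · intro p hp
        rcases Multiset.mem_add.mp hp with h | h
        · exact h₁ p h
        · exact h₂ p h
      · simp [hs₁, hs₂]
      · simp [hp₁, hp₂]
  | zero => simp
  | add z w hz hw ihz ihw => rw [mul_add]; exact add_mem ihz ihw
  | smul c z hz ih =>
      have : x * (c • z) = c • (x * z) := by
        simp only [smul_eq_mul]; ring
      rw [this]; exact Submodule.smul_mem _ _ ih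

lemma J_mul_J {x y : Polynomial S} {a b : ℕ} (hx : x ∈ Jmod F a)
    (hy : y ∈ Jmod F b) : x * y ∈ Jmod F (a + b) := by
  induction hx using Submodule.span_induction with
  | mem z hz => exact gen_mul_J F hz hy
  | zero => simp
  | add z w hz hw ihz ihw => rw [add_mul]; exact add_mem ihz ihw
  | smul c z hz ih =>
      have : (c • z) * y = c • (z * y) := by
        simp only [smul_eq_mul]; ring
      rw [this]; exact Submodule.smul_mem _ _ ih

variable (hpos : ∀ p ∈ F, 0 < p.2)
variable (ha : ∀ p ∈ F, ∀ n' : ℕ, 0 < n' → n' ≤ p.2 → (p.1, n') ∈ F)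
variable (hb : ∀ p ∈ F, ∀ α : ℕ, α < p.2 → (hasseDeriv α p.1, p.2 - α) ∈ F)

include hpos ha in
lemma J_step (n : ℕ) : Jmod F (n + 1) ≤ Jmod F n := by
  rw [Jmod, Submodule.span_le]
  rintro b ⟨l, hl, hsum, hprod⟩
  have hne : l ≠ 0 := by
    rintro rfl; simp at hsum
  obtain ⟨p, hp⟩ := Multiset.exists_mem_of_ne_zero hne
  obtain ⟨t, rfl⟩ := Multiset.exists_cons_of_mem hp
  have hsum' : p.2 + (t.map Prod.snd).sum = n + 1 := by
    simpa using hsum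
  have hprod' : p.1 * (t.map Prod.fst).prod = b := by
    simpa using hprod
  have htF : ∀ q ∈ t, q ∈ F := fun q hq => hl q (Multiset.mem_cons_of_mem hq)
  have hpF : p ∈ F := hl p hp
  rcases Nat.lt_or_ge 1 p.2 with h2 | h1
  · -- p.2 ≥ 2 : lower the exponent, product unchanged
    refine Submodule.subset_span ⟨(p.1, p.2 - 1) ::ₘ t, ?_, ?_, ?_⟩
    · intro q hq
      rcases Multiset.mem_cons.mp hq with rfl | h
      · exact ha p hpF (p.2 - 1) (by omega) (by omega)
      · exact htF q h
    · simp only [Multiset.map_cons, Multiset.sum_cons]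
      omega
    · simpa using hprod'
  · -- p.2 = 1 : drop the factor, multiply by p.1 as scalar
    have hp2 : p.2 = 1 := le_antisymm h1 (hpos p hpF)
    have hts : (t.map Prod.snd).sum = n := by omega
    have : (t.map Prod.fst).prod ∈ Jmod F n :=
      Submodule.subset_span ⟨t, htF, hts, rfl⟩
    have := Submodule.smul_mem (Jmod F n) p.1 this
    simpa [hprod'] using this

include hpos ha in
lemma J_antitone {k n : ℕ} (h : k ≤ n) : Jmod F n ≤ Jmod F k := by
  induction n with
  | zero => simp_all
  | succ m ih =>
      rcases Nat.lt_or_ge k (m + 1) with hlt | hge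
      · exact (J_step F hpos ha m).trans (ih (by omega))
      · have : k = m + 1 := by omega
        subst this; exact le_rfl

include hpos ha hb in
lemma hasse_gen {b : Polynomial S} {n : ℕ} (hbG : b ∈ GenSet F n) (α : ℕ) :
    hasseDeriv α b ∈ Jmod F (n - α) := by
  obtain ⟨l, hl, hsum, hprod⟩ := hbG
  subst hsum; subst hprod
  induction l using Multiset.induction_on generalizing α with
  | empty =>
      simp only [Multiset.map_zero, Multiset.prod_zero, Multiset.sum_zero]
      rcases Nat.eq_zero_or_pos α with rfl | hα
      · simpa [Jmod] using Submodule.subset_span (one_mem_GenSet F)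
      · rw [hasseDeriv_apply_one _ hα]; simp
  | cons p t iht =>
      have hpF : p ∈ F := hl p (Multiset.mem_cons_self p t)
      have htF : ∀ q ∈ t, q ∈ F := fun q hq => hl q (Multiset.mem_cons_of_mem hq)
      simp only [Multiset.map_cons, Multiset.prod_cons, Multiset.sum_cons]
      rw [hasseDeriv_mul]
      refine sum_mem ?_
      rintro ⟨i, j⟩ hij
      have hij' : i + j = α := Finset.HasAntidiagonal.mem_antidiagonal.mp hij
      set s := (t.map Prod.snd).sum with hs
      rcases Nat.lt_or_ge i p.2 with hi | hi
      · -- i < p.2 : Δ^i p.1 is again a generator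
        have hgen : hasseDeriv i p.1 ∈ GenSet F (p.2 - i) :=
          singleton_mem_GenSet F (hb p hpF i hi)
        have hrest : hasseDeriv j ((t.map Prod.fst).prod) ∈ Jmod F (s - j) :=
          iht j htF
        have := gen_mul_J F hgen hrest
        exact J_antitone F hpos ha (by omega) this
      · -- i ≥ p.2 : Δ^i p.1 acts as a scalar
        have hrest : hasseDeriv j ((t.map Prod.fst).prod) ∈ Jmod F (s - j) :=
          iht j htF
        have hmem := Submodule.smul_mem (Jmod F (s - j)) (hasseDeriv i p.1) hrest
        rw [smul_eq_mul] at hmem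
        exact J_antitone F hpos ha (by omega) hmem

include hpos ha hb in
lemma hasse_J {b : Polynomial S} {n : ℕ} (hbJ : b ∈ Jmod F n) (α : ℕ) :
    hasseDeriv α b ∈ Jmod F (n - α) := by
  induction hbJ using Submodule.span_induction generalizing α with
  | mem z hz => exact hasse_gen F hpos ha hb hz α
  | zero => simp
  | add z w hz hw ihz ihw => rw [map_add]; exact add_mem (ihz α) (ihw α)
  | smul c z hz ih =>
      rw [smul_eq_mul, hasseDeriv_mul]
      refine sum_mem ?_
      rintro ⟨i, j⟩ hij
      have hij' : i + j = α := Finset.HasAntidiagonal.mem_antidiagonal.mp hij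
      have hz' : hasseDeriv j z ∈ Jmod F (n - j) := ih j
      have hmem := Submodule.smul_mem (Jmod F (n - j)) (hasseDeriv i c) hz'
      rw [smul_eq_mul] at hmem
      exact J_antitone F hpos ha (by omega) hmem

end Aux

theorem stmt_4 (S : Type*) [CommRing S] (F : Finset ((Polynomial S) × ℕ))
    (hpos : ∀ p ∈ F, 0 < p.2)
    (ha : ∀ p ∈ F, ∀ n' : ℕ, 0 < n' → n' ≤ p.2 → (p.1, n') ∈ F)
    (hb : ∀ p ∈ F, ∀ α : ℕ, α < p.2 → (hasseDeriv α p.1, p.2 - α) ∈ F)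
    (A : Subalgebra (Polynomial S) (Polynomial (Polynomial S)))
    (hA : A = Algebra.adjoin (Polynomial S)
      ((fun p : (Polynomial S) × ℕ => (C p.1 * X ^ p.2 : Polynomial (Polynomial S))) '' F)) :
    (∀ (b : Polynomial S) (k : ℕ),
      (C b * X ^ (k + 1) : Polynomial (Polynomial S)) ∈ A → (C b * X ^ k : Polynomial (Polynomial S)) ∈ A) ∧
    (∀ (b : Polynomial S) (n α : ℕ), α ≤ n →
      (C b * X ^ n : Polynomial (Polynomial S)) ∈ A →
      (C (hasseDeriv α b) * X ^ (n - α) : Polynomial (Polynomial S)) ∈ A) := by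
  subst hA
  -- Direction: b ∈ Jmod F n → C b * X^n ∈ adjoin
  have key₁ : ∀ (n : ℕ) (b : Polynomial S), b ∈ Jmod F n →
      (C b * X ^ n : Polynomial (Polynomial S)) ∈ Algebra.adjoin (Polynomial S)
        ((fun p : (Polynomial S) × ℕ => (C p.1 * X ^ p.2 : Polynomial (Polynomial S))) '' F) := by
    intro n b hbJ
    induction hbJ using Submodule.span_induction with
    | mem z hz =>
        obtain ⟨l, hl, hsum, hprod⟩ := hz
        subst hsum; subst hprod
        induction l using Multiset.induction_on with
        | empty => simpa using one_mem _
        | cons p t iht =>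
            have hpF : p ∈ F := hl p (Multiset.mem_cons_self p t)
            have htF : ∀ q ∈ t, q ∈ F := fun q hq => hl q (Multiset.mem_cons_of_mem hq)
            simp only [Multiset.map_cons, Multiset.prod_cons, Multiset.sum_cons]
            have heq : (C (p.1 * (t.map Prod.fst).prod) *
                X ^ (p.2 + (t.map Prod.snd).sum) : Polynomial (Polynomial S)) =
                (C p.1 * X ^ p.2) * (C ((t.map Prod.fst).prod) * X ^ ((t.map Prod.snd).sum)) := by
              rw [map_mul, pow_add]; ring
            rw [heq]
            exact mul_mem (Algebra.subset_adjoin ⟨p, hpF, rfl⟩) (iht htF)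
    | zero => rw [map_zero, zero_mul]; exact zero_mem _
    | add z w hz hw ihz ihw =>
        have : (C (z + w) * X ^ n : Polynomial (Polynomial S)) =
            C z * X ^ n + C w * X ^ n := by rw [map_add]; ring
        rw [this]; exact add_mem ihz ihw
    | smul c z hz ih =>
        have : (C (c • z) * X ^ n : Polynomial (Polynomial S)) =
            C c * (C z * X ^ n) := by rw [smul_eq_mul, map_mul]; ring
        rw [this]
        exact mul_mem (Subalgebra.algebraMap_mem _ c) ih
  -- Direction: elements of the adjoin have all coefficients in the filtration
  have key₂ : ∀ f ∈ Algebra.adjoin (Polynomial S)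
      ((fun p : (Polynomial S) × ℕ => (C p.1 * X ^ p.2 : Polynomial (Polynomial S))) '' F),
      ∀ k : ℕ, f.coeff k ∈ Jmod F k := by
    intro f hf
    induction hf using Algebra.adjoin_induction with
    | mem z hz =>
        obtain ⟨p, hpF, rfl⟩ := hz
        intro k
        rw [coeff_C_mul, coeff_X_pow]
        by_cases hk : k = p.2
        · subst hk
          simpa [Jmod] using Submodule.subset_span (singleton_mem_GenSet F hpF)
        · simp [hk]
    | algebraMap r =>
        intro k
        have : (algebraMap (Polynomial S) (Polynomial (Polynomial S)) r) = C r := rfl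
        rw [this, coeff_C]
        by_cases hk : k = 0
        · subst hk; simpa using mem_J_zero F r
        · simp [hk]
    | add x y hx hy ihx ihy =>
        intro k; rw [coeff_add]; exact add_mem (ihx k) (ihy k)
    | mul x y hx hy ihx ihy =>
        intro k
        rw [coeff_mul]
        refine sum_mem ?_
        rintro ⟨i, j⟩ hij
        have hij' : i + j = k := Finset.HasAntidiagonal.mem_antidiagonal.mp hij
        have := J_mul_J F (ihx i) (ihy j)
        rwa [hij'] at this
  have mem_iff : ∀ (b : Polynomial S) (n : ℕ),
      (C b * X ^ n : Polynomial (Polynomial S)) ∈ Algebra.adjoin (Polynomial S)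
        ((fun p : (Polynomial S) × ℕ => (C p.1 * X ^ p.2 : Polynomial (Polynomial S))) '' F)
      ↔ b ∈ Jmod F n := by
    intro b n
    constructor
    · intro h
      have := key₂ _ h n
      rwa [coeff_C_mul, coeff_X_pow, if_pos rfl, mul_one] at this
    · exact key₁ n b
  constructor
  · intro b k h
    rw [mem_iff] at h ⊢
    exact J_step F hpos ha k h
  · intro b n α hα h
    rw [mem_iff] at h ⊢
    exact hasse_J F hpos ha hb h α
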